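/- Let J_s := (1/s)·(all-ones s×s matrix). The map π₁ : M_{m×n} → M_{sm×sn} given by A ↦ J_s ⊗ A satisfies π₁(A + B) = π₁(A) + π₁(B) and π₁(A ⊛ B) = π₁(A) ⊛ π₁(B), i.e., it is a non-unital ring homomorphism from (M_{m×n}, +, ⊛) to (M_{sm×sn}, +, ⊛). -/

import Mathlib

open Matrix Kronecker Finset

noncomputable section

/-- The all-ones column vector of length `k`, viewed as a `k × 1` matrix. -/
def onesCol (k : ℕ) : Matrix (Fin k) (Fin 1) ℝ := Matrix.of fun _ _ => 1

/-- `A ⊗ 1ᵀ_α`, reindexed to an ordinary `Fin`-indexed matrix. -/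
def rightExpand {m n : ℕ} (A : Matrix (Fin m) (Fin n) ℝ) (α : ℕ) :
    Matrix (Fin m) (Fin (n * α)) ℝ :=
  Matrix.reindex (Equiv.prodUnique (Fin m) (Fin 1)) finProdFinEquiv (A ⊗ₖ (onesCol α)ᵀ)

/-- `B ⊗ 1_β`, reindexed to an ordinary `Fin`-indexed matrix. -/
def leftExpand {p q : ℕ} (B : Matrix (Fin p) (Fin q) ℝ) (β : ℕ) :
    Matrix (Fin (p * β)) (Fin q) ℝ :=
  Matrix.reindex finProdFinEquiv (Equiv.prodUnique (Fin q) (Fin 1)) (B ⊗ₖ onesCol β)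

theorem dk_dim_eq (n p : ℕ) :
    n * (Nat.lcm n p / n) = p * (Nat.lcm n p / p) := by
  rw [Nat.mul_div_cancel' (Nat.dvd_lcm_left n p),
    Nat.mul_div_cancel' (Nat.dvd_lcm_right n p)]

/-- The dimension keeping semi-tensor product (DK-STP)
`A ⊛ B := (A ⊗ 1ᵀ_{t/n})(B ⊗ 1_{t/p})`, `t = lcm(n,p)`. -/
def dkstp {m n p q : ℕ} (A : Matrix (Fin m) (Fin n) ℝ) (B : Matrix (Fin p) (Fin q) ℝ) :
    Matrix (Fin m) (Fin q) ℝ :=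
  rightExpand A (Nat.lcm n p / n) *
    (leftExpand B (Nat.lcm n p / p)).submatrix (Fin.cast (dk_dim_eq n p)) id

infixl:70 " ⊛ " => dkstp

/-- The bridge matrix `Ψ_{n×p} := (I_n ⊗ 1ᵀ_{t/n})(I_p ⊗ 1_{t/p})`. -/
def bridge (n p : ℕ) : Matrix (Fin n) (Fin p) ℝ :=
  (1 : Matrix (Fin n) (Fin n) ℝ) ⊛ (1 : Matrix (Fin p) (Fin p) ℝ)

/-- `x ⊗ 1_α`, as a vector of length `m * α`. -/
def vecExpand {m : ℕ} (x : Fin m → ℝ) (α : ℕ) : Fin (m * α) → ℝ :=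
  fun i => x (finProdFinEquiv.symm i).1

/-- The VV-STP `x ⊙ y := (x ⊗ 1_{t/m})ᵀ(y ⊗ 1_{t/n})`, `t = lcm(m,n)`. -/
def vvstp {m n : ℕ} (x : Fin m → ℝ) (y : Fin n → ℝ) : ℝ :=
  vecExpand x (Nat.lcm m n / m) ⬝ᵥ
    fun i => vecExpand y (Nat.lcm m n / n) (Fin.cast (dk_dim_eq m n) i)


/-- `J_s := (1/s) · (all-ones s×s matrix)`. -/
def Jmat (s : ℕ) : Matrix (Fin s) (Fin s) ℝ := Matrix.of fun _ _ => (1 : ℝ) / s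

/-- `π₁ : A ↦ J_s ⊗ A`, reindexed to `M_{sm×sn}`. -/
def pi1 {m n : ℕ} (s : ℕ) (A : Matrix (Fin m) (Fin n) ℝ) :
    Matrix (Fin (s * m)) (Fin (s * n)) ℝ :=
  Matrix.reindex finProdFinEquiv finProdFinEquiv (Jmat s ⊗ₖ A)

lemma dkstp_apply {m n p q : ℕ} (A : Matrix (Fin m) (Fin n) ℝ) (B : Matrix (Fin p) (Fin q) ℝ)
    (i : Fin m) (j : Fin q) :
    (A ⊛ B) i j = ∑ k : Fin (n * (Nat.lcm n p / n)),
      A i k.divNat * B (Fin.cast (dk_dim_eq n p) k).divNat j := by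
  simp [dkstp, rightExpand, leftExpand, Matrix.mul_apply, Matrix.submatrix_apply,
    finProdFinEquiv_symm_apply, onesCol]

lemma pi1_apply {m n : ℕ} (s : ℕ) (A : Matrix (Fin m) (Fin n) ℝ)
    (i : Fin (s * m)) (j : Fin (s * n)) :
    pi1 s A i j = (1 / s) * A i.modNat j.modNat := by
  simp [pi1, Jmat, finProdFinEquiv_symm_apply]

lemma dims (s n m : ℕ) :
    (s * n) * (Nat.lcm (s * n) (s * m) / (s * n)) = s * (n * (Nat.lcm n m / n)) := by
  rw [Nat.mul_div_cancel' (Nat.dvd_lcm_left _ _), Nat.mul_div_cancel' (Nat.dvd_lcm_left _ _)]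
  exact Nat.lcm_mul_left _ _ _

lemma keyNat (N a T q r : ℕ) (hr : r < N * a) (hT : T = N * a) :
    (r + T * q) / a % N = r / a := by
  have ha : 0 < a := by
    rcases Nat.eq_zero_or_pos a with rfl | h
    · simp at hr
    · exact h
  subst hT
  rw [show N * a * q = a * (N * q) by ring, Nat.add_mul_div_left _ _ ha,
    Nat.add_mul_mod_self_left]
  exact Nat.mod_eq_of_lt (Nat.div_lt_of_lt_mul (by linarith))

/-- `π₁ : A ↦ J_s ⊗ A` is a non-unital ring homomorphism from
`(M_{m×n}, +, ⊛)` to `(M_{sm×sn}, +, ⊛)`. -/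
theorem stmt11 {m n : ℕ} (s : ℕ) (A B : Matrix (Fin m) (Fin n) ℝ) :
    pi1 s (A + B) = pi1 s A + pi1 s B ∧ pi1 s (A ⊛ B) = pi1 s A ⊛ pi1 s B := by
  constructor
  · ext i j
    simp [pi1_apply, Matrix.add_apply, mul_add]
  · ext i j
    rw [pi1_apply, dkstp_apply, dkstp_apply]
    simp only [pi1_apply]
    -- reindex the RHS sum
    rw [← Equiv.sum_comp (finProdFinEquiv.trans (finCongr (dims s n m).symm))]
    rw [Fintype.sum_prod_type]
    have hterm : ∀ (q : Fin s) (r : Fin (n * (Nat.lcm n m / n))),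
        (1 / (s:ℝ) * A i.modNat
            (((finProdFinEquiv.trans (finCongr (dims s n m).symm)) (q, r)).divNat.modNat)) *
          (1 / (s:ℝ) * B ((Fin.cast (dk_dim_eq (s*n) (s*m))
            ((finProdFinEquiv.trans (finCongr (dims s n m).symm)) (q, r))).divNat.modNat)
            j.modNat)
        = 1 / (s:ℝ) * (1 / s) *
            (A i.modNat r.divNat * B (Fin.cast (dk_dim_eq n m) r).divNat j.modNat) := by
      intro q r
      have e1 : ((finProdFinEquiv.trans (finCongr (dims s n m).symm)) (q, r)).divNat.modNat
          = r.divNat := by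
        apply Fin.ext
        simp only [Fin.divNat, Fin.modNat, Equiv.trans_apply, finCongr_apply, Fin.coe_cast,
          finProdFinEquiv_apply_val]
        rw [show Nat.lcm (s*n) (s*m) / (s*n) = Nat.lcm n m / n by
          rw [Nat.lcm_mul_left, Nat.mul_div_mul_left _ _ q.pos]]
        exact keyNat n _ _ q r r.isLt rfl
      have e2 : (Fin.cast (dk_dim_eq (s*n) (s*m))
            ((finProdFinEquiv.trans (finCongr (dims s n m).symm)) (q, r))).divNat.modNat
          = (Fin.cast (dk_dim_eq n m) r).divNat := by
        apply Fin.ext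
        simp only [Fin.divNat, Fin.modNat, Equiv.trans_apply, finCongr_apply, Fin.coe_cast,
          finProdFinEquiv_apply_val]
        rw [show Nat.lcm (s*n) (s*m) / (s*m) = Nat.lcm n m / m by
          rw [Nat.lcm_mul_left, Nat.mul_div_mul_left _ _ q.pos]]
        exact keyNat m _ _ q r (by rw [← dk_dim_eq n m]; exact r.isLt) (dk_dim_eq n m)
      rw [e1, e2]; ring
    rw [Finset.sum_congr rfl (fun q _ => Finset.sum_congr rfl (fun r _ => hterm q r))]
    rw [Finset.sum_const, Finset.card_univ, Fintype.card_fin, ← Finset.mul_sum, nsmul_eq_mul]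
    rcases Nat.eq_zero_or_pos s with hs | hs
    · subst hs; simp
    · have : (s:ℝ) ≠ 0 := Nat.cast_ne_zero.mpr hs.ne'
      field_simp
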